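/- For every n ≥ 1, the number of ordered pairs of integer vectors ((a_1,…,a_n), (b_1,…,b_n)) with 0 ≤ a_k ≤ k and 1 ≤ b_k ≤ k for all k ∈ {1,…,n} and with {a_1, b_1, …, a_n, b_n} ⊇ {1,…,n}, equals 2^n times the number of sequences of sets S_1, S_2, …, S_n such that each S_k is a nonempty subset of {1,…,k} with at most two elements and S_1 ∪ S_2 ∪ ⋯ ∪ S_n = {1,…,n}. (Consequently the latter count equals the normalized median Genocchi number h_n = H_{2n+1}/2^n.) -/

import Mathlib

open Finset

namespace Stmt19

lemma pair_min' {x y : ℕ} (h : x ≤ y) (hne : ({x, y} : Finset ℕ).Nonempty) :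
    ({x, y} : Finset ℕ).min' hne = x := by
  refine le_antisymm (Finset.min'_le _ _ (by simp)) (Finset.le_min' _ _ _ ?_)
  intro z hz
  rcases Finset.mem_insert.mp hz with rfl | hz
  · exact le_rfl
  · simp only [Finset.mem_singleton] at hz; omega

lemma pair_max' {x y : ℕ} (h : x ≤ y) (hne : ({x, y} : Finset ℕ).Nonempty) :
    ({x, y} : Finset ℕ).max' hne = y := by
  refine le_antisymm (Finset.max'_le _ _ _ ?_) (Finset.le_max' _ _ (by simp))
  intro z hz
  rcases Finset.mem_insert.mp hz with rfl | hz
  · exact h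
  · simp only [Finset.mem_singleton] at hz; omega

lemma eq_pair (s : Finset ℕ) (h : s.Nonempty) (h2 : s.card ≤ 2) :
    s = {s.min' h, s.max' h} := by
  refine (Finset.eq_of_subset_of_card_le ?_ ?_).symm
  · intro x hx
    rcases Finset.mem_insert.mp hx with rfl | hx
    · exact s.min'_mem h
    · rw [Finset.mem_singleton] at hx; subst hx; exact s.max'_mem h
  · by_cases hmm : s.min' h = s.max' h
    · have hsub : s ⊆ {s.min' h} := by
        intro x hx
        have h1 := Finset.min'_le s x hx
        have h2 := Finset.le_max' s x hx
        simp only [Finset.mem_singleton]; omega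
      have := Finset.card_le_card hsub
      simp only [Finset.card_singleton] at this
      have : 1 ≤ ({s.min' h, s.max' h} : Finset ℕ).card :=
        Finset.card_pos.mpr ⟨s.min' h, Finset.mem_insert_self _ _⟩
      omega
    · have : ({s.min' h, s.max' h} : Finset ℕ).card = 2 := by
        rw [Finset.card_insert_of_notMem (by simp [hmm]), Finset.card_singleton]
      omega

def mn (s : Finset ℕ) : ℕ := s.min.untopD 0
def mx (s : Finset ℕ) : ℕ := s.max.unbotD 0

lemma mn_eq (s : Finset ℕ) (h : s.Nonempty) : mn s = s.min' h := by
  rw [mn, ← Finset.coe_min' h]; rfl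

lemma mx_eq (s : Finset ℕ) (h : s.Nonempty) : mx s = s.max' h := by
  rw [mx, ← Finset.coe_max' h]; rfl

/-- Local analysis of an admissible set. -/
lemma set_facts {k : ℕ} {s : Finset ℕ} (hsub : s ⊆ Finset.Icc 1 k)
    (hne : s.Nonempty) (hc : s.card ≤ 2) :
    1 ≤ mn s ∧ mn s ≤ mx s ∧ mx s ≤ k ∧ s = {mn s, mx s} := by
  rw [mn_eq s hne, mx_eq s hne]
  have h1 := hsub (s.min'_mem hne)
  have h2 := hsub (s.max'_mem hne)
  rw [Finset.mem_Icc] at h1 h2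
  exact ⟨h1.1, s.min'_le _ (s.max'_mem hne), h2.2, eq_pair s hne hc⟩

lemma mn_pair {x y : ℕ} (h : x ≤ y) : mn {x, y} = x := by
  rw [mn_eq _ ⟨x, by simp⟩]; exact pair_min' h _

lemma mx_pair {x y : ℕ} (h : x ≤ y) : mx {x, y} = y := by
  rw [mx_eq _ ⟨x, by simp⟩]; exact pair_max' h _

lemma mn_singleton (x : ℕ) : mn {x} = x := by
  rw [mn_eq _ ⟨x, by simp⟩]; simp

lemma mx_singleton (x : ℕ) : mx {x} = x := by
  rw [mx_eq _ ⟨x, by simp⟩]; simp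

def fwdS (n : ℕ) (a b : ℕ → ℕ) : ℕ → Finset ℕ :=
  fun k => if k ∈ Finset.Icc 1 n then (if a k = 0 then {b k} else {a k, b k}) else ∅

def bwdA (n : ℕ) (S : ℕ → Finset ℕ) (ε : {x // x ∈ Finset.Icc 1 n} → Bool) : ℕ → ℕ :=
  fun k => if h : k ∈ Finset.Icc 1 n then
    (if ε ⟨k, h⟩ then mx (S k) else if mn (S k) = mx (S k) then 0 else mn (S k)) else 0

def bwdB (n : ℕ) (S : ℕ → Finset ℕ) (ε : {x // x ∈ Finset.Icc 1 n} → Bool) : ℕ → ℕ :=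
  fun k => if h : k ∈ Finset.Icc 1 n then
    (if ε ⟨k, h⟩ then mn (S k) else mx (S k)) else 0

lemma fwd_spec (n : ℕ) (a b : ℕ → ℕ)
    (h1 : ∀ k ∈ Finset.Icc 1 n, a k ≤ k ∧ 1 ≤ b k ∧ b k ≤ k)
    (h2 : ∀ m ∈ Finset.Icc 1 n, ∃ k ∈ Finset.Icc 1 n, a k = m ∨ b k = m) :
    (∀ k, k ∉ Finset.Icc 1 n → fwdS n a b k = ∅) ∧
    (∀ k ∈ Finset.Icc 1 n, fwdS n a b k ⊆ Finset.Icc 1 k ∧ (fwdS n a b k).Nonempty ∧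
      (fwdS n a b k).card ≤ 2) ∧
    (Finset.Icc 1 n).biUnion (fwdS n a b) = Finset.Icc 1 n := by
  refine ⟨fun k hk => by simp [fwdS, hk], ?_, ?_⟩
  · intro k hk
    obtain ⟨ha, hb1, hb2⟩ := h1 k hk
    simp only [fwdS, if_pos hk]
    by_cases h0 : a k = 0
    · rw [if_pos h0]
      refine ⟨?_, ⟨b k, by simp⟩, by simp⟩
      intro x hx
      rw [Finset.mem_singleton] at hx; subst hx
      exact Finset.mem_Icc.mpr ⟨hb1, hb2⟩
    · rw [if_neg h0]
      refine ⟨?_, ⟨a k, by simp⟩, ?_⟩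
      · intro x hx
        rcases Finset.mem_insert.mp hx with rfl | hx
        · exact Finset.mem_Icc.mpr ⟨by omega, ha⟩
        · rw [Finset.mem_singleton] at hx; subst hx
          exact Finset.mem_Icc.mpr ⟨hb1, hb2⟩
      · exact le_trans (Finset.card_insert_le _ _) (by simp)
  · apply Finset.Subset.antisymm
    · intro m hm
      rw [Finset.mem_biUnion] at hm
      obtain ⟨k, hk, hmk⟩ := hm
      obtain ⟨ha, hb1, hb2⟩ := h1 k hk
      rw [Finset.mem_Icc] at hk ⊢
      simp only [fwdS, if_pos (Finset.mem_Icc.mpr hk)] at hmk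
      by_cases h0 : a k = 0
      · rw [if_pos h0, Finset.mem_singleton] at hmk; subst hmk; omega
      · rw [if_neg h0] at hmk
        rcases Finset.mem_insert.mp hmk with rfl | hmk
        · omega
        · rw [Finset.mem_singleton] at hmk; subst hmk; omega
    · intro m hm
      obtain ⟨k, hk, hak⟩ := h2 m hm
      rw [Finset.mem_biUnion]
      refine ⟨k, hk, ?_⟩
      have hm1 : 1 ≤ m := (Finset.mem_Icc.mp hm).1
      simp only [fwdS, if_pos hk]
      rcases hak with rfl | rfl
      · rw [if_neg (by omega)]; exact Finset.mem_insert_self _ _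
      · by_cases h0 : a k = 0
        · rw [if_pos h0]; exact Finset.mem_singleton_self _
        · rw [if_neg h0]; exact Finset.mem_insert.mpr (Or.inr (Finset.mem_singleton_self _))

lemma bwd_spec (n : ℕ) (S : ℕ → Finset ℕ) (ε : {x // x ∈ Finset.Icc 1 n} → Bool)
    (hS1 : ∀ k ∈ Finset.Icc 1 n, S k ⊆ Finset.Icc 1 k ∧ (S k).Nonempty ∧ (S k).card ≤ 2)
    (hS2 : (Finset.Icc 1 n).biUnion S = Finset.Icc 1 n) :
    (∀ k, k ∉ Finset.Icc 1 n → bwdA n S ε k = 0 ∧ bwdB n S ε k = 0) ∧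
    (∀ k ∈ Finset.Icc 1 n, bwdA n S ε k ≤ k ∧ 1 ≤ bwdB n S ε k ∧ bwdB n S ε k ≤ k) ∧
    (∀ m ∈ Finset.Icc 1 n, ∃ k ∈ Finset.Icc 1 n, bwdA n S ε k = m ∨ bwdB n S ε k = m) := by
  refine ⟨fun k hk => by simp [bwdA, bwdB, hk], ?_, ?_⟩
  · intro k hk
    obtain ⟨hsub, hne, hc⟩ := hS1 k hk
    obtain ⟨f1, f2, f3, f4⟩ := set_facts hsub hne hc
    simp only [bwdA, bwdB, dif_pos hk]
    cases ε ⟨k, hk⟩ <;> simp only [if_true, if_false, Bool.false_eq_true] <;>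
      [skip; exact ⟨by omega, by omega, by omega⟩]
    by_cases hmm : mn (S k) = mx (S k) <;> simp [hmm] <;> omega
  · intro m hm
    have : m ∈ (Finset.Icc 1 n).biUnion S := by rw [hS2]; exact hm
    rw [Finset.mem_biUnion] at this
    obtain ⟨k, hk, hmk⟩ := this
    obtain ⟨hsub, hne, hc⟩ := hS1 k hk
    obtain ⟨f1, f2, f3, f4⟩ := set_facts hsub hne hc
    refine ⟨k, hk, ?_⟩
    rw [f4] at hmk
    simp only [bwdA, bwdB, dif_pos hk]
    rcases Finset.mem_insert.mp hmk with rfl | hmk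
    · -- m = mn (S k)
      cases hε : ε ⟨k, hk⟩
      · simp only [Bool.false_eq_true, if_false]
        by_cases hmm : mn (S k) = mx (S k)
        · right; omega
        · left; rw [if_neg hmm]
      · right; simp
    · rw [Finset.mem_singleton] at hmk; subst hmk
      cases hε : ε ⟨k, hk⟩
      · right; simp
      · left; simp

lemma left_inv (n : ℕ) (a b : ℕ → ℕ)
    (h0 : ∀ k, k ∉ Finset.Icc 1 n → a k = 0 ∧ b k = 0)
    (h1 : ∀ k ∈ Finset.Icc 1 n, a k ≤ k ∧ 1 ≤ b k ∧ b k ≤ k) :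
    bwdA n (fwdS n a b) (fun k => decide (b k.1 ≤ a k.1)) = a ∧
    bwdB n (fwdS n a b) (fun k => decide (b k.1 ≤ a k.1)) = b := by
  constructor <;> funext k <;> by_cases hk : k ∈ Finset.Icc 1 n <;>
    try (solve | simp [bwdA, bwdB, hk, (h0 k hk).1, (h0 k hk).2])
  all_goals {
    obtain ⟨ha, hb1, hb2⟩ := h1 k hk
    simp only [bwdA, bwdB, dif_pos hk, fwdS, if_pos hk]
    by_cases hz : a k = 0
    · simp only [if_pos hz, mn_singleton, mx_singleton]
      rw [decide_eq_false (by omega)]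
      simp [hz]
    · rw [if_neg hz]
      rcases le_or_gt (b k) (a k) with hle | hlt
      · rw [decide_eq_true hle]
        rw [Finset.pair_comm, mn_pair hle, mx_pair hle]
        simp
      · rw [decide_eq_false (by omega)]
        rw [mn_pair hlt.le, mx_pair hlt.le]
        simp only [Bool.false_eq_true, if_false]
        all_goals split_ifs <;> omega
  }

lemma right_inv (n : ℕ) (S : ℕ → Finset ℕ) (ε : {x // x ∈ Finset.Icc 1 n} → Bool)
    (hS0 : ∀ k, k ∉ Finset.Icc 1 n → S k = ∅)
    (hS1 : ∀ k ∈ Finset.Icc 1 n, S k ⊆ Finset.Icc 1 k ∧ (S k).Nonempty ∧ (S k).card ≤ 2) :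
    fwdS n (bwdA n S ε) (bwdB n S ε) = S ∧
    (fun k => decide (bwdB n S ε k.1 ≤ bwdA n S ε k.1)) = ε := by
  constructor
  · funext k
    by_cases hk : k ∈ Finset.Icc 1 n
    · obtain ⟨hsub, hne, hc⟩ := hS1 k hk
      obtain ⟨f1, f2, f3, f4⟩ := set_facts hsub hne hc
      simp only [fwdS, if_pos hk, bwdA, bwdB, dif_pos hk]
      cases hε : ε ⟨k, hk⟩
      · simp only [Bool.false_eq_true, if_false]
        by_cases hmm : mn (S k) = mx (S k)
        · rw [if_pos hmm, if_pos rfl]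
          rw [f4, hmm]; simp [mx_singleton]
        · rw [if_neg hmm, if_neg (by omega)]
          exact f4.symm
      · simp only [if_true]
        rw [if_neg (by omega)]
        rw [Finset.pair_comm]
        exact f4.symm
    · rw [hS0 k hk]; simp [fwdS, hk]
  · funext k
    obtain ⟨k, hk⟩ := k
    obtain ⟨hsub, hne, hc⟩ := hS1 k hk
    obtain ⟨f1, f2, f3, f4⟩ := set_facts hsub hne hc
    simp only [bwdA, bwdB, dif_pos hk]
    cases hε : ε ⟨k, hk⟩
    · simp only [Bool.false_eq_true, if_false]
      by_cases hmm : mn (S k) = mx (S k)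
      · rw [if_pos hmm]
        exact decide_eq_false (by omega)
      · rw [if_neg hmm]
        exact decide_eq_false (by omega)
    · simp only [if_true]
      exact decide_eq_true f2
end Stmt19


/-- For every `n ≥ 1`, the number of ordered pairs of integer
vectors `((a 1,…,a n), (b 1,…,b n))` with `0 ≤ a k ≤ k` and `1 ≤ b k ≤ k` for
all `k ∈ {1,…,n}` and with `{a 1, b 1, …, a n, b n} ⊇ {1,…,n}`, equals `2^n`
times the number of sequences of sets `S 1, …, S n` where each `S k` is a
nonempty subset of `{1,…,k}` with at most two elements and
`S 1 ∪ ⋯ ∪ S n = {1,…,n}`. (Hence the latter count is the normalized median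
Genocchi number `h_n = H_{2n+1}/2^n`.) Vectors are modeled as functions
`ℕ → ℕ` vanishing outside `{1,…,n}`, and set sequences as functions
`ℕ → Finset ℕ` that are empty outside `{1,…,n}`. -/
theorem card_pairs_eq_two_pow_mul_card_set_sequences (n : ℕ) (hn : 1 ≤ n) :
    Nat.card {ab : (ℕ → ℕ) × (ℕ → ℕ) //
      (∀ k, k ∉ Finset.Icc 1 n → ab.1 k = 0 ∧ ab.2 k = 0) ∧
      (∀ k ∈ Finset.Icc 1 n, ab.1 k ≤ k ∧ 1 ≤ ab.2 k ∧ ab.2 k ≤ k) ∧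
      (∀ m ∈ Finset.Icc 1 n, ∃ k ∈ Finset.Icc 1 n, ab.1 k = m ∨ ab.2 k = m)} =
    2 ^ n *
      Nat.card {S : ℕ → Finset ℕ //
        (∀ k, k ∉ Finset.Icc 1 n → S k = ∅) ∧
        (∀ k ∈ Finset.Icc 1 n, S k ⊆ Finset.Icc 1 k ∧ (S k).Nonempty ∧ (S k).card ≤ 2) ∧
        (Finset.Icc 1 n).biUnion S = Finset.Icc 1 n} := by

  classical
  have e : {ab : (ℕ → ℕ) × (ℕ → ℕ) //
      (∀ k, k ∉ Finset.Icc 1 n → ab.1 k = 0 ∧ ab.2 k = 0) ∧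
      (∀ k ∈ Finset.Icc 1 n, ab.1 k ≤ k ∧ 1 ≤ ab.2 k ∧ ab.2 k ≤ k) ∧
      (∀ m ∈ Finset.Icc 1 n, ∃ k ∈ Finset.Icc 1 n, ab.1 k = m ∨ ab.2 k = m)} ≃
      ({S : ℕ → Finset ℕ //
        (∀ k, k ∉ Finset.Icc 1 n → S k = ∅) ∧
        (∀ k ∈ Finset.Icc 1 n, S k ⊆ Finset.Icc 1 k ∧ (S k).Nonempty ∧ (S k).card ≤ 2) ∧
        (Finset.Icc 1 n).biUnion S = Finset.Icc 1 n} ×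
        ({x // x ∈ Finset.Icc 1 n} → Bool)) :=
    { toFun := fun p =>
        ⟨⟨Stmt19.fwdS n p.1.1 p.1.2,
          (Stmt19.fwd_spec n p.1.1 p.1.2 p.2.2.1 p.2.2.2)⟩,
         fun k => decide (p.1.2 k.1 ≤ p.1.1 k.1)⟩,
      invFun := fun q =>
        ⟨(Stmt19.bwdA n q.1.1 q.2, Stmt19.bwdB n q.1.1 q.2),
         Stmt19.bwd_spec n q.1.1 q.2 q.1.2.2.1 q.1.2.2.2⟩,
      left_inv := by
        rintro ⟨⟨a, b⟩, h0, h1, h2⟩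
        have h := Stmt19.left_inv n a b h0 h1
        exact Subtype.ext (Prod.ext h.1 h.2),
      right_inv := by
        rintro ⟨⟨S, hS0, hS1, hS2⟩, ε⟩
        have h := Stmt19.right_inv n S ε hS0 hS1
        exact Prod.ext (Subtype.ext h.1) h.2 }
  rw [Nat.card_congr e, Nat.card_prod]
  have h2 : Nat.card ({x // x ∈ Finset.Icc 1 n} → Bool) = 2 ^ n := by
    rw [Nat.card_eq_fintype_card]
    simp [Nat.card_Icc]
  rw [h2, mul_comm]
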